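/- If commands from U never change the Γ_S component and queries in Q_S depend only on the Γ_S component, then for any command sequence in S∘U, every query q ∈ Q_S evaluated on the resulting state agrees with q evaluated on the state of S obtained by executing only the subsequence of Ψ_S-commands starting from the same initial Γ_S state. -/

import Mathlib

/-- Execute a list of augmented-scheme commands: `S`-commands act on the
first component, `U`-commands on the whole pair. -/
def execA {ΓS ΓU : Type*} :
    List ((ΓS → ΓS) ⊕ (ΓS × ΓU → ΓS × ΓU)) → ΓS × ΓU → ΓS × ΓU
  | [], p => p
  | (Sum.inl f) :: cs, p => execA cs (f p.1, p.2)
  | (Sum.inr e) :: cs, p => execA cs (e p)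

/-- Execute a list of `S`-commands. -/
def execS {ΓS : Type*} : List (ΓS → ΓS) → ΓS → ΓS
  | [], γ => γ
  | f :: cs, γ => execS cs (f γ)

/-- The subsequence of `S`-commands of an augmented command sequence. -/
def filterS {ΓS ΓU : Type*} (cs : List ((ΓS → ΓS) ⊕ (ΓS × ΓU → ΓS × ΓU))) :
    List (ΓS → ΓS) :=
  cs.filterMap (fun c => match c with | Sum.inl f => some f | Sum.inr _ => none)

/-- queries of S on the result of an augmented run agree with
queries on the result of running only the S-subsequence. -/
theorem aug_queries_agree_with_filtered_run {ΓS ΓU : Type*}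
    (QS : Set (ΓS → Bool))
    (cs : List ((ΓS → ΓS) ⊕ (ΓS × ΓU → ΓS × ΓU)))
    (hU : ∀ c ∈ cs, ∀ e, c = Sum.inr e → ∀ p : ΓS × ΓU, (e p).1 = p.1)
    (γ0 : ΓS) (u : ΓU) :
    ∀ q ∈ QS, q (execA cs (γ0, u)).1 = q (execS (filterS cs) γ0) := by
  suffices h : (execA cs (γ0, u)).1 = execS (filterS cs) γ0 by
    intro q _; rw [h]
  induction cs generalizing γ0 u with
  | nil => rfl
  | cons c cs ih =>
    cases c with
    | inl f =>
      simp only [execA, filterS, List.filterMap_cons, execS]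
      exact ih (fun c hc => hU c (List.mem_cons_of_mem _ hc)) _ _
    | inr e =>
      simp only [execA, filterS, List.filterMap_cons]
      have h1 : (e (γ0, u)).1 = γ0 := hU _ List.mem_cons_self e rfl _
      have := ih (fun c hc => hU c (List.mem_cons_of_mem _ hc)) (e (γ0, u)).1 (e (γ0, u)).2
      rw [show filterS cs = List.filterMap (fun c => match c with | Sum.inl f => some f | Sum.inr _ => none) cs from rfl] at this
      rw [← Prod.mk.eta (p := e (γ0, u))] at this ⊢
      rw [this, h1]
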